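/- Let n ≥ 7 and 0 < s < 2. With U₁(X) = κ_{n,s}(1+|X|^{2-s})^{-(n-2)/(2-s)}, one has ∫_{ℝⁿ}|X|⁴|∇U₁|² dX / ∫_{ℝⁿ}|X|²U₁² dX = (n-2)(n+2)(n+4-s) / (2(2n-2-s)). -/

import Mathlib

open MeasureTheory Set Real Filter Topology ENNReal

-- integrability lemma
theorem intJ {σ a m : ℝ} (hσ : 0 < σ) (ha : -1 < a) (hm : 0 ≤ m) (h : a - m * σ < -1) :
    IntegrableOn (fun r : ℝ => r ^ a * (1 + r ^ σ) ^ (-m)) (Ioi 0) := by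
  have hcont : ContinuousOn (fun r : ℝ => r ^ a * (1 + r ^ σ) ^ (-m)) (Ioi 0) := by
    intro r hr
    have hr0 : (0:ℝ) < r := hr
    have h1 : ContinuousAt (fun r : ℝ => r ^ a) r :=
      Real.continuousAt_rpow_const _ _ (Or.inl hr0.ne')
    have h2 : ContinuousAt (fun r : ℝ => (1 + r ^ σ) ^ (-m)) r := by
      have hb : ContinuousAt (fun r : ℝ => 1 + r ^ σ) r :=
        continuousAt_const.add (Real.continuousAt_rpow_const _ _ (Or.inl hr0.ne'))
      exact ContinuousAt.rpow_const hb (Or.inl (by positivity))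
    exact (h1.mul h2).continuousWithinAt
  have hmeas : AEStronglyMeasurable (fun r : ℝ => r ^ a * (1 + r ^ σ) ^ (-m))
      (volume.restrict (Ioi (0:ℝ))) :=
    hcont.aestronglyMeasurable measurableSet_Ioi
  have hsplit : Ioc (0:ℝ) 1 ∪ Ioi 1 = Ioi 0 := Ioc_union_Ioi_eq_Ioi zero_le_one
  rw [← hsplit]
  apply IntegrableOn.union
  · -- on Ioc 0 1
    have hg : IntegrableOn (fun r : ℝ => r ^ a) (Ioc (0:ℝ) 1) := by
      have := intervalIntegral.intervalIntegrable_rpow' (a := 0) (b := 1) ha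
      rwa [intervalIntegrable_iff_integrableOn_Ioc_of_le zero_le_one] at this
    apply hg.mono' (hmeas.mono_set Ioc_subset_Ioi_self)
    · filter_upwards [ae_restrict_mem measurableSet_Ioc] with r hr
      have hr0 : (0:ℝ) < r := hr.1
      have hW : (1 + r ^ σ) ^ (-m) ≤ 1 :=
        Real.rpow_le_one_of_one_le_of_nonpos (by linarith [Real.rpow_nonneg hr0.le σ]) (neg_nonpos.mpr hm)
      have hb : (0:ℝ) < 1 + r ^ σ := by positivity
      rw [Real.norm_eq_abs,
        abs_of_nonneg (mul_nonneg (Real.rpow_nonneg hr0.le _) (Real.rpow_nonneg hb.le _))]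
      calc r ^ a * (1 + r ^ σ) ^ (-m) ≤ r ^ a * 1 :=
            mul_le_mul_of_nonneg_left hW (Real.rpow_nonneg hr0.le _)
        _ = r ^ a := mul_one _
  · -- on Ioi 1
    have hg : IntegrableOn (fun r : ℝ => r ^ (a - m * σ)) (Ioi (1:ℝ)) :=
      integrableOn_Ioi_rpow_of_lt h one_pos
    apply hg.mono' (hmeas.mono_set (Ioi_subset_Ioi zero_le_one))
    · filter_upwards [ae_restrict_mem measurableSet_Ioi] with r hr
      have hr0 : (0:ℝ) < r := lt_trans one_pos hr
      have hb : (0:ℝ) < 1 + r ^ σ := by positivity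
      rw [Real.norm_eq_abs,
        abs_of_nonneg (mul_nonneg (Real.rpow_nonneg hr0.le _) (Real.rpow_nonneg hb.le _))]
      have h1 : (1 + r ^ σ) ^ (-m) ≤ (r ^ σ) ^ (-m) := by
        apply Real.rpow_le_rpow_of_nonpos (by positivity) (by linarith [Real.rpow_pos_of_pos hr0 σ]) (neg_nonpos.mpr hm)
      calc r ^ a * (1 + r ^ σ) ^ (-m) ≤ r ^ a * (r ^ σ) ^ (-m) :=
            mul_le_mul_of_nonneg_left h1 (by positivity)
        _ = r ^ (a - m * σ) := by
            rw [← Real.rpow_mul hr0.le, ← Real.rpow_add hr0]; ring_nf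

theorem Jpos {σ a m : ℝ} (hσ : 0 < σ) (ha : -1 < a) (hm : 0 ≤ m) (h : a - m * σ < -1) :
    0 < ∫ r in Ioi (0:ℝ), r ^ a * (1 + r ^ σ) ^ (-m) := by
  have hnn : 0 ≤ᶠ[ae (volume.restrict (Ioi (0:ℝ)))]
      fun r : ℝ => r ^ a * (1 + r ^ σ) ^ (-m) := by
    filter_upwards [ae_restrict_mem measurableSet_Ioi] with r hr
    have hr0 : (0:ℝ) < r := hr
    have hb : (0:ℝ) < 1 + r ^ σ := by positivity
    positivity
  rw [setIntegral_pos_iff_support_of_nonneg_ae hnn (intJ hσ ha hm h)]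
  · have hsub : Ioi (0:ℝ) ⊆ Function.support (fun r : ℝ => r ^ a * (1 + r ^ σ) ^ (-m)) := by
      intro r hr
      have hr0 : (0:ℝ) < r := hr
      have : (0:ℝ) < r ^ a * (1 + r ^ σ) ^ (-m) := by
        have hb : (0:ℝ) < 1 + r ^ σ := by positivity
        exact mul_pos (Real.rpow_pos_of_pos hr0 _) (Real.rpow_pos_of_pos hb _)
      exact this.ne'
    calc (0:ℝ≥0∞) < volume (Ioi (0:ℝ)) := by rw [Real.volume_Ioi]; exact ENNReal.zero_lt_top
      _ = volume (Function.support (fun r : ℝ => r ^ a * (1 + r ^ σ) ^ (-m)) ∩ Ioi 0) := by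
          rw [inter_eq_right.mpr hsub]

theorem stepJ {σ a m : ℝ} (hσ : 0 < σ) (ha : -1 < a) (hm : 0 < m) (h : a + 1 < m * σ) :
    (a + 1) * ∫ r in Ioi (0:ℝ), r ^ a * (1 + r ^ σ) ^ (-m) =
      (m * σ) * ∫ r in Ioi (0:ℝ), r ^ (a + σ) * (1 + r ^ σ) ^ (-(m + 1)) := by
  have h2 : (a + σ) - (m + 1) * σ < -1 := by nlinarith
  have h1 : a - m * σ < -1 := by nlinarith
  have hint1 : IntegrableOn (fun r : ℝ => r ^ a * (1 + r ^ σ) ^ (-m)) (Ioi 0) :=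
    intJ hσ ha hm.le h1
  have hint2 : IntegrableOn (fun r : ℝ => r ^ (a + σ) * (1 + r ^ σ) ^ (-(m + 1))) (Ioi 0) :=
    intJ hσ (by linarith) (by linarith) h2
  set F : ℝ → ℝ := fun r => r ^ (a + 1) * (1 + r ^ σ) ^ (-m) with hF
  set f' : ℝ → ℝ := fun r =>
    (a + 1) * (r ^ a * (1 + r ^ σ) ^ (-m)) - (m * σ) * (r ^ (a + σ) * (1 + r ^ σ) ^ (-(m + 1)))
    with hf'
  have hderiv : ∀ r ∈ Ioi (0:ℝ), HasDerivAt F (f' r) r := by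
    intro r hr
    have hr0 : (0:ℝ) < r := hr
    have hb : (0:ℝ) < 1 + r ^ σ := by positivity
    have d1 : HasDerivAt (fun r : ℝ => r ^ (a + 1)) ((a + 1) * r ^ a) r := by
      have := Real.hasDerivAt_rpow_const (p := a + 1) (x := r) (Or.inl hr0.ne')
      convert this using 1
      ring_nf
    have dinner : HasDerivAt (fun r : ℝ => 1 + r ^ σ) (σ * r ^ (σ - 1)) r := by
      have := Real.hasDerivAt_rpow_const (p := σ) (x := r) (Or.inl hr0.ne')
      simpa using (this.const_add 1)
    have d2 : HasDerivAt (fun r : ℝ => (1 + r ^ σ) ^ (-m))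
        (σ * r ^ (σ - 1) * (-m) * (1 + r ^ σ) ^ (-m - 1)) r :=
      dinner.rpow_const (p := -m) (Or.inl hb.ne')
    have : HasDerivAt F _ r := d1.mul d2
    convert this using 1
    rw [hf']
    have e1 : r ^ (a + 1) * r ^ (σ - 1) = r ^ (a + σ) := by
      rw [← Real.rpow_add hr0]; ring_nf
    have e2 : ((1 + r ^ σ) ^ (-(m + 1)) : ℝ) = (1 + r ^ σ) ^ (-m - 1) := by
      congr 1
      ring
    simp only
    rw [e2]
    linear_combination (m * σ * (1 + r ^ σ) ^ (-m - 1)) * e1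
  have hcont : ContinuousWithinAt F (Ici (0:ℝ)) 0 := by
    apply ContinuousAt.continuousWithinAt
    have c1 : ContinuousAt (fun r : ℝ => r ^ (a + 1)) 0 :=
      Real.continuousAt_rpow_const _ _ (Or.inr (by linarith : (0:ℝ) ≤ a + 1))
    have c2 : ContinuousAt (fun r : ℝ => (1 + r ^ σ) ^ (-m)) 0 := by
      have cb : ContinuousAt (fun r : ℝ => 1 + r ^ σ) 0 :=
        continuousAt_const.add (Real.continuousAt_rpow_const _ _ (Or.inr hσ.le))
      apply ContinuousAt.rpow_const cb
      left
      simp [Real.zero_rpow hσ.ne']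
    exact c1.mul c2
  have htop : Tendsto F atTop (𝓝 0) := by
    have heq : ∀ᶠ r in atTop, r ^ (a + 1 - m * σ) * (1 + r ^ (-σ)) ^ (-m) = F r := by
      filter_upwards [eventually_gt_atTop (0:ℝ)] with r hr0
      have hrσ : (0:ℝ) < r ^ σ := Real.rpow_pos_of_pos hr0 _
      have key : 1 + r ^ σ = r ^ σ * (1 + r ^ (-σ)) := by
        rw [mul_add, mul_one, ← Real.rpow_add hr0]
        simp
        ring
      have hFr : F r = r ^ (a + 1 - m * σ) * (1 + r ^ (-σ)) ^ (-m) := by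
        rw [hF]
        simp only
        rw [key, Real.mul_rpow hrσ.le (by positivity), ← Real.rpow_mul hr0.le,
          ← mul_assoc, mul_comm (r ^ (a + 1)) (r ^ (σ * -m)), ← Real.rpow_add hr0]
        ring_nf
      rw [hFr]
    apply Tendsto.congr' heq
    have t1 : Tendsto (fun r : ℝ => r ^ (a + 1 - m * σ)) atTop (𝓝 0) := by
      have h' : a + 1 - m * σ = -(m * σ - (a + 1)) := by ring
      rw [h']
      exact tendsto_rpow_neg_atTop (by linarith)
    have t2 : Tendsto (fun r : ℝ => (1 + r ^ (-σ)) ^ (-m)) atTop (𝓝 1) := by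
      have hin : Tendsto (fun r : ℝ => 1 + r ^ (-σ)) atTop (𝓝 1) := by
        have := tendsto_rpow_neg_atTop hσ
        simpa using (this.const_add 1)
      have hout : ContinuousAt (fun t : ℝ => t ^ (-m)) 1 :=
        Real.continuousAt_rpow_const _ _ (Or.inl one_ne_zero)
      have := hout.tendsto.comp hin
      simpa [Function.comp_def] using this
    have := t1.mul t2
    simpa using this
  have hf'int : IntegrableOn f' (Ioi 0) := by
    rw [hf']
    exact (hint1.const_mul _).sub (hint2.const_mul _)
  have key := integral_Ioi_of_hasDerivAt_of_tendsto hcont hderiv hf'int htop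
  have hF0 : F 0 = 0 := by
    rw [hF]
    simp [Real.zero_rpow (by linarith : a + 1 ≠ 0)]
  rw [hF0, sub_zero] at key
  rw [hf'] at key
  rw [integral_sub (hint1.const_mul _) (hint2.const_mul _),
    integral_const_mul, integral_const_mul] at key
  linarith

theorem grad_helper {n : ℕ} (κ σ p : ℝ) (hκ : 0 < κ) (hσ : 0 < σ) (hp : 0 < p)
    (x : EuclideanSpace ℝ (Fin n)) (hx : x ≠ 0) :
    ‖gradient (fun y : EuclideanSpace ℝ (Fin n) => κ * (1 + ‖y‖ ^ σ) ^ (-p)) x‖ =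
      κ * (p * σ) * ‖x‖ ^ (σ - 1) * (1 + ‖x‖ ^ σ) ^ (-p - 1) := by
  have hxn : (0:ℝ) < ‖x‖ := norm_pos_iff.mpr hx
  have hu0 : (0:ℝ) < ‖x‖ ^ (2:ℝ) := Real.rpow_pos_of_pos hxn _
  have hkey : ∀ y : EuclideanSpace ℝ (Fin n), ((‖y‖:ℝ) ^ (2:ℝ)) ^ (σ/2) = ‖y‖ ^ σ := by
    intro y
    rw [← Real.rpow_mul (norm_nonneg y)]
    congr 1
    ring
  have hw0 : (0:ℝ) < 1 + (‖x‖ ^ (2:ℝ)) ^ (σ/2) := by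
    have := Real.rpow_pos_of_pos hu0 (σ/2)
    linarith
  set φ : ℝ → ℝ := fun u => κ * (1 + u ^ (σ/2)) ^ (-p) with hφ
  have hU : (fun y : EuclideanSpace ℝ (Fin n) => κ * (1 + ‖y‖ ^ σ) ^ (-p)) =
      fun y => φ (‖y‖ ^ (2:ℝ)) := by
    funext y
    rw [hφ]
    simp only
    rw [hkey y]
  set c : ℝ := κ * (σ/2 * (‖x‖ ^ (2:ℝ)) ^ (σ/2 - 1) * (-p) *
      (1 + (‖x‖ ^ (2:ℝ)) ^ (σ/2)) ^ (-p - 1)) with hc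
  have dφ : HasDerivAt φ c (‖x‖ ^ (2:ℝ)) := by
    have dinner : HasDerivAt (fun u : ℝ => 1 + u ^ (σ/2))
        (σ/2 * (‖x‖ ^ (2:ℝ)) ^ (σ/2 - 1)) (‖x‖ ^ (2:ℝ)) := by
      have := Real.hasDerivAt_rpow_const (p := σ/2) (x := ‖x‖ ^ (2:ℝ)) (Or.inl hu0.ne')
      exact this.const_add 1
    have douter := dinner.rpow_const (p := -p) (Or.inl hw0.ne')
    exact douter.const_mul κ
  have dn : HasFDerivAt (fun y : EuclideanSpace ℝ (Fin n) => ‖y‖ ^ (2:ℝ))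
      (((2:ℝ) * ‖x‖ ^ ((2:ℝ) - 2)) • innerSL ℝ x) x := hasFDerivAt_norm_rpow x one_lt_two
  have dU : HasFDerivAt (fun y : EuclideanSpace ℝ (Fin n) => κ * (1 + ‖y‖ ^ σ) ^ (-p))
      (c • (((2:ℝ) * ‖x‖ ^ ((2:ℝ) - 2)) • innerSL ℝ x)) x := by
    rw [hU]
    have := dφ.comp_hasFDerivAt x dn
    exact this
  have hgrad : gradient (fun y : EuclideanSpace ℝ (Fin n) => κ * (1 + ‖y‖ ^ σ) ^ (-p)) x =
      (InnerProductSpace.toDual ℝ _).symm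
        (fderiv ℝ (fun y : EuclideanSpace ℝ (Fin n) => κ * (1 + ‖y‖ ^ σ) ^ (-p)) x) := rfl
  rw [hgrad, LinearIsometryEquiv.norm_map, dU.fderiv, norm_smul, norm_smul,
    innerSL_apply_norm]
  have h22 : ((2:ℝ) - 2) = 0 := by norm_num
  rw [h22, Real.rpow_zero, mul_one]
  have hnc : ‖c‖ = κ * (σ/2) * (‖x‖ ^ (2:ℝ)) ^ (σ/2 - 1) * p *
      (1 + (‖x‖ ^ (2:ℝ)) ^ (σ/2)) ^ (-p - 1) := by
    have h1 : (0:ℝ) < (‖x‖ ^ (2:ℝ)) ^ (σ/2 - 1) := Real.rpow_pos_of_pos hu0 _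
    have h2 : (0:ℝ) < (1 + (‖x‖ ^ (2:ℝ)) ^ (σ/2)) ^ (-p - 1) := Real.rpow_pos_of_pos hw0 _
    have h3 : c = -(κ * (σ/2) * (‖x‖ ^ (2:ℝ)) ^ (σ/2 - 1) * p *
        (1 + (‖x‖ ^ (2:ℝ)) ^ (σ/2)) ^ (-p - 1)) := by rw [hc]; ring
    have h4 : (0:ℝ) < κ * (σ/2) * (‖x‖ ^ (2:ℝ)) ^ (σ/2 - 1) * p *
        (1 + (‖x‖ ^ (2:ℝ)) ^ (σ/2)) ^ (-p - 1) :=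
      mul_pos (mul_pos (mul_pos (mul_pos hκ (by linarith)) h1) hp) h2
    rw [Real.norm_eq_abs, h3, abs_neg, abs_of_pos h4]
  rw [hnc, Real.norm_eq_abs, abs_of_nonneg (by norm_num : (0:ℝ) ≤ 2)]
  rw [hkey x]
  have hexp : (‖x‖ ^ (2:ℝ)) ^ (σ/2 - 1) * ‖x‖ = ‖x‖ ^ (σ - 1) := by
    rw [← Real.rpow_mul (norm_nonneg x)]
    nth_rewrite 2 [show (‖x‖:ℝ) = ‖x‖ ^ (1:ℝ) by rw [Real.rpow_one]]
    rw [← Real.rpow_add hxn]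
    congr 1
    ring
  calc κ * (σ/2) * (‖x‖ ^ (2:ℝ)) ^ (σ/2 - 1) * p * (1 + ‖x‖ ^ σ) ^ (-p - 1) * (2 * ‖x‖)
      = κ * (p * σ) * ((‖x‖ ^ (2:ℝ)) ^ (σ/2 - 1) * ‖x‖) * (1 + ‖x‖ ^ σ) ^ (-p - 1) := by
        ring
    _ = κ * (p * σ) * ‖x‖ ^ (σ - 1) * (1 + ‖x‖ ^ σ) ^ (-p - 1) := by rw [hexp]
noncomputable def kappa (n : ℕ) (s : ℝ) : ℝ :=
  (((n : ℝ) - s) * ((n : ℝ) - 2)) ^ (((n : ℝ) - 2) / (2 * (2 - s)))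

noncomputable def U1 (n : ℕ) (s : ℝ) (X : EuclideanSpace ℝ (Fin n)) : ℝ :=
  kappa n s * (1 + ‖X‖ ^ (2 - s)) ^ (-(((n : ℝ) - 2) / (2 - s)))

set_option maxHeartbeats 2000000 in
theorem stmt_9 (n : ℕ) (hn : 7 ≤ n) (s : ℝ) (hs0 : 0 < s) (hs2 : s < 2) :
    (∫ X : EuclideanSpace ℝ (Fin n), ‖X‖ ^ 4 * ‖gradient (U1 n s) X‖ ^ 2) /
        (∫ X : EuclideanSpace ℝ (Fin n), ‖X‖ ^ 2 * (U1 n s X) ^ 2) =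
      ((n : ℝ) - 2) * ((n : ℝ) + 2) * ((n : ℝ) + 4 - s) / (2 * (2 * (n : ℝ) - 2 - s)) := by
  have hσ : (0:ℝ) < 2 - s := by linarith
  have hn7 : (7:ℝ) ≤ (n:ℝ) := by exact_mod_cast hn
  have hκ : 0 < kappa n s := Real.rpow_pos_of_pos (by nlinarith) _
  have hp : 0 < ((n:ℝ) - 2) / (2 - s) := div_pos (by linarith) hσ
  have hpσ : ((n:ℝ) - 2) / (2 - s) * (2 - s) = (n:ℝ) - 2 := div_mul_cancel₀ _ hσ.ne'
  haveI : Nontrivial (EuclideanSpace ℝ (Fin n)) := by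
    apply Module.nontrivial_of_finrank_pos (R := ℝ)
    rw [finrank_euclideanSpace_fin]
    omega
  have hdim : Module.finrank ℝ (EuclideanSpace ℝ (Fin n)) = n := finrank_euclideanSpace_fin
  -- rewrite numerator integrand as radial function
  have hU1eq : U1 n s = fun y : EuclideanSpace ℝ (Fin n) =>
      kappa n s * (1 + ‖y‖ ^ (2 - s)) ^ (-(((n:ℝ) - 2) / (2 - s))) := rfl
  have hnum_eq : (fun X : EuclideanSpace ℝ (Fin n) => ‖X‖ ^ 4 * ‖gradient (U1 n s) X‖ ^ 2) =
      fun X : EuclideanSpace ℝ (Fin n) => (fun r : ℝ => (kappa n s * ((n:ℝ) - 2)) ^ 2 *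
        (r ^ (2 * (2 - s) + 2) *
          (1 + r ^ (2 - s)) ^ (-(2 * (((n:ℝ) - 2) / (2 - s)) + 2)))) ‖X‖ := by
    funext X
    simp only
    by_cases hX : X = 0
    · rw [hX]
      simp only [norm_zero]
      rw [Real.zero_rpow (by nlinarith : 2 * (2 - s) + 2 ≠ 0)]
      norm_num
    · rw [hU1eq, grad_helper (kappa n s) (2 - s) (((n:ℝ) - 2) / (2 - s)) hκ hσ hp X hX, hpσ]
      have hx0 : (0:ℝ) < ‖X‖ := norm_pos_iff.mpr hX
      have hrp : (0:ℝ) ≤ ‖X‖ ^ (2 - s) := Real.rpow_nonneg (norm_nonneg X) _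
      have hw : (0:ℝ) < 1 + ‖X‖ ^ (2 - s) := by linarith
      have sq1 : ((‖X‖:ℝ) ^ ((2 - s) - 1)) ^ (2:ℕ) = ‖X‖ ^ (2 * (2 - s) - 2) := by
        rw [← Real.rpow_natCast ((‖X‖:ℝ) ^ ((2 - s) - 1)) 2, ← Real.rpow_mul (norm_nonneg X)]
        congr 1
        push_cast
        ring
      have sq2 : ((1 + ‖X‖ ^ (2 - s)) ^ (-(((n:ℝ) - 2) / (2 - s)) - 1)) ^ (2:ℕ) =
          (1 + ‖X‖ ^ (2 - s)) ^ (-(2 * (((n:ℝ) - 2) / (2 - s)) + 2)) := by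
        rw [← Real.rpow_natCast ((1 + ‖X‖ ^ (2 - s)) ^ (-(((n:ℝ) - 2) / (2 - s)) - 1)) 2,
          ← Real.rpow_mul hw.le]
        congr 1
        push_cast
        ring
      have sq3 : (‖X‖:ℝ) ^ (4:ℕ) * ‖X‖ ^ (2 * (2 - s) - 2) = ‖X‖ ^ (2 * (2 - s) + 2) := by
        rw [← Real.rpow_natCast (‖X‖:ℝ) 4, ← Real.rpow_add hx0]
        congr 1
        push_cast
        ring
      calc ‖X‖ ^ 4 * (kappa n s * ((n:ℝ) - 2) * ‖X‖ ^ ((2 - s) - 1) *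
            (1 + ‖X‖ ^ (2 - s)) ^ (-(((n:ℝ) - 2) / (2 - s)) - 1)) ^ 2
          = (kappa n s * ((n:ℝ) - 2)) ^ 2 * ((‖X‖ ^ (4:ℕ) * (‖X‖ ^ ((2 - s) - 1)) ^ (2:ℕ)) *
            ((1 + ‖X‖ ^ (2 - s)) ^ (-(((n:ℝ) - 2) / (2 - s)) - 1)) ^ (2:ℕ)) := by ring
        _ = (kappa n s * ((n:ℝ) - 2)) ^ 2 * (‖X‖ ^ (2 * (2 - s) + 2) *
            (1 + ‖X‖ ^ (2 - s)) ^ (-(2 * (((n:ℝ) - 2) / (2 - s)) + 2))) := by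
            rw [sq1, sq2, sq3]
  have hden_eq : (fun X : EuclideanSpace ℝ (Fin n) => ‖X‖ ^ 2 * (U1 n s X) ^ 2) =
      fun X : EuclideanSpace ℝ (Fin n) => (fun r : ℝ => r ^ 2 *
        (kappa n s * (1 + r ^ (2 - s)) ^ (-(((n:ℝ) - 2) / (2 - s)))) ^ 2) ‖X‖ := rfl
  rw [hnum_eq, hden_eq,
    integral_fun_norm_addHaar (volume : Measure (EuclideanSpace ℝ (Fin n)))
      (fun r : ℝ => (kappa n s * ((n:ℝ) - 2)) ^ 2 *
        (r ^ (2 * (2 - s) + 2) * (1 + r ^ (2 - s)) ^ (-(2 * (((n:ℝ) - 2) / (2 - s)) + 2)))),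
    integral_fun_norm_addHaar (volume : Measure (EuclideanSpace ℝ (Fin n)))
      (fun r : ℝ => r ^ 2 *
        (kappa n s * (1 + r ^ (2 - s)) ^ (-(((n:ℝ) - 2) / (2 - s)))) ^ 2),
    hdim]
  set V := volume.real (Metric.ball (0 : EuclideanSpace ℝ (Fin n)) 1) with hVdef
  have hV : 0 < V :=
    ENNReal.toReal_pos (Metric.measure_ball_pos volume 0 one_pos).ne' measure_ball_lt_top.ne
  have h1d_num : (∫ y in Ioi (0:ℝ), y ^ (n - 1) • ((kappa n s * ((n:ℝ) - 2)) ^ 2 *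
      (y ^ (2 * (2 - s) + 2) * (1 + y ^ (2 - s)) ^ (-(2 * (((n:ℝ) - 2) / (2 - s)) + 2))))) =
      (kappa n s * ((n:ℝ) - 2)) ^ 2 * ∫ r in Ioi (0:ℝ), r ^ ((n:ℝ) + 1 + (2 - s) + (2 - s)) *
        (1 + r ^ (2 - s)) ^ (-(2 * (((n:ℝ) - 2) / (2 - s)) + 1 + 1)) := by
    rw [← integral_const_mul]
    apply setIntegral_congr_fun measurableSet_Ioi
    intro y hy
    have hy0 : (0:ℝ) < y := hy
    have e1 : (y:ℝ) ^ (n - 1) = y ^ ((n:ℝ) - 1) := by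
      rw [← Real.rpow_natCast y (n - 1)]
      congr 1
      rw [Nat.cast_sub (by omega : 1 ≤ n)]
      norm_num
    have e2 : y ^ ((n:ℝ) - 1) * y ^ (2 * (2 - s) + 2) = y ^ ((n:ℝ) + 1 + (2 - s) + (2 - s)) := by
      rw [← Real.rpow_add hy0]
      congr 1
      ring
    have e3 : (1 + y ^ (2 - s)) ^ (-(2 * (((n:ℝ) - 2) / (2 - s)) + 2)) =
        (1 + y ^ (2 - s)) ^ (-(2 * (((n:ℝ) - 2) / (2 - s)) + 1 + 1)) := by
      congr 1
      ring
    beta_reduce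
    rw [smul_eq_mul]
    calc y ^ (n - 1) * ((kappa n s * ((n:ℝ) - 2)) ^ 2 *
          (y ^ (2 * (2 - s) + 2) * (1 + y ^ (2 - s)) ^ (-(2 * (((n:ℝ) - 2) / (2 - s)) + 2))))
        = (kappa n s * ((n:ℝ) - 2)) ^ 2 * ((y ^ ((n:ℝ) - 1) * y ^ (2 * (2 - s) + 2)) *
          (1 + y ^ (2 - s)) ^ (-(2 * (((n:ℝ) - 2) / (2 - s)) + 2))) := by rw [e1]; ring
      _ = (kappa n s * ((n:ℝ) - 2)) ^ 2 * (y ^ ((n:ℝ) + 1 + (2 - s) + (2 - s)) *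
          (1 + y ^ (2 - s)) ^ (-(2 * (((n:ℝ) - 2) / (2 - s)) + 1 + 1))) := by rw [e2, e3]
  have h1d_den : (∫ y in Ioi (0:ℝ), y ^ (n - 1) • (y ^ 2 *
      (kappa n s * (1 + y ^ (2 - s)) ^ (-(((n:ℝ) - 2) / (2 - s)))) ^ 2)) =
      (kappa n s) ^ 2 * ∫ r in Ioi (0:ℝ), r ^ ((n:ℝ) + 1) *
        (1 + r ^ (2 - s)) ^ (-(2 * (((n:ℝ) - 2) / (2 - s)))) := by
    rw [← integral_const_mul]
    apply setIntegral_congr_fun measurableSet_Ioi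
    intro y hy
    have hy0 : (0:ℝ) < y := hy
    have hrp : (0:ℝ) ≤ y ^ (2 - s) := Real.rpow_nonneg hy0.le _
    have hw : (0:ℝ) < 1 + y ^ (2 - s) := by linarith
    have e1 : (y:ℝ) ^ (n - 1) * y ^ (2:ℕ) = y ^ ((n:ℝ) - 1 + 2) := by
      rw [← Real.rpow_natCast y (n - 1), ← Real.rpow_natCast y 2, ← Real.rpow_add hy0]
      congr 1
      rw [Nat.cast_sub (by omega : 1 ≤ n)]
      norm_num
    have e2 : y ^ ((n:ℝ) - 1 + 2) = y ^ ((n:ℝ) + 1) := by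
      congr 1
      ring
    have sq2 : ((1 + y ^ (2 - s)) ^ (-(((n:ℝ) - 2) / (2 - s)))) ^ (2:ℕ) =
        (1 + y ^ (2 - s)) ^ (-(2 * (((n:ℝ) - 2) / (2 - s)))) := by
      rw [← Real.rpow_natCast ((1 + y ^ (2 - s)) ^ (-(((n:ℝ) - 2) / (2 - s)))) 2,
        ← Real.rpow_mul hw.le]
      congr 1
      push_cast
      ring
    beta_reduce
    rw [smul_eq_mul]
    calc y ^ (n - 1) * (y ^ 2 * (kappa n s * (1 + y ^ (2 - s)) ^ (-(((n:ℝ) - 2) / (2 - s)))) ^ 2)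
        = (kappa n s) ^ 2 * ((y ^ (n - 1) * y ^ (2:ℕ)) *
          ((1 + y ^ (2 - s)) ^ (-(((n:ℝ) - 2) / (2 - s)))) ^ (2:ℕ)) := by ring
      _ = (kappa n s) ^ 2 * (y ^ ((n:ℝ) + 1) *
          (1 + y ^ (2 - s)) ^ (-(2 * (((n:ℝ) - 2) / (2 - s))))) := by rw [e1, e2, sq2]
  rw [h1d_num, h1d_den, nsmul_eq_mul, nsmul_eq_mul, smul_eq_mul, smul_eq_mul]
  -- the three 1-d integrals and their relations
  have h2pσ : 2 * (((n:ℝ) - 2) / (2 - s)) * (2 - s) = 2 * ((n:ℝ) - 2) := by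
    linear_combination 2 * hpσ
  have rel1 := stepJ (σ := 2 - s) (a := (n:ℝ) + 1) (m := 2 * (((n:ℝ) - 2) / (2 - s))) hσ
    (by linarith) (by linarith) (by nlinarith)
  have rel2 := stepJ (σ := 2 - s) (a := (n:ℝ) + 1 + (2 - s))
    (m := 2 * (((n:ℝ) - 2) / (2 - s)) + 1) hσ (by linarith) (by linarith) (by nlinarith)
  have hJ0 : 0 < ∫ r in Ioi (0:ℝ), r ^ ((n:ℝ) + 1) *
      (1 + r ^ (2 - s)) ^ (-(2 * (((n:ℝ) - 2) / (2 - s)))) :=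
    Jpos hσ (by linarith) (by linarith) (by nlinarith)
  have hDen : ((n:ℝ) * (V * ((kappa n s) ^ 2 * ∫ r in Ioi (0:ℝ), r ^ ((n:ℝ) + 1) *
      (1 + r ^ (2 - s)) ^ (-(2 * (((n:ℝ) - 2) / (2 - s))))))) ≠ 0 := by
    have : (0:ℝ) < (n:ℝ) := by linarith
    positivity
  have rel1' : ((n:ℝ) + 2) * (∫ r in Ioi (0:ℝ), r ^ ((n:ℝ) + 1) *
      (1 + r ^ (2 - s)) ^ (-(2 * (((n:ℝ) - 2) / (2 - s))))) =
      (2 * ((n:ℝ) - 2)) * (∫ r in Ioi (0:ℝ), r ^ ((n:ℝ) + 1 + (2 - s)) *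
      (1 + r ^ (2 - s)) ^ (-(2 * (((n:ℝ) - 2) / (2 - s)) + 1))) := by
    linear_combination rel1 + (∫ r in Ioi (0:ℝ), r ^ ((n:ℝ) + 1 + (2 - s)) *
      (1 + r ^ (2 - s)) ^ (-(2 * (((n:ℝ) - 2) / (2 - s)) + 1))) * h2pσ
  have rel2' : (((n:ℝ) + 4 - s)) * (∫ r in Ioi (0:ℝ), r ^ ((n:ℝ) + 1 + (2 - s)) *
      (1 + r ^ (2 - s)) ^ (-(2 * (((n:ℝ) - 2) / (2 - s)) + 1))) =
      (2 * (n:ℝ) - 2 - s) * (∫ r in Ioi (0:ℝ), r ^ ((n:ℝ) + 1 + (2 - s) + (2 - s)) *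
      (1 + r ^ (2 - s)) ^ (-(2 * (((n:ℝ) - 2) / (2 - s)) + 1 + 1))) := by
    linear_combination rel2 + (∫ r in Ioi (0:ℝ), r ^ ((n:ℝ) + 1 + (2 - s) + (2 - s)) *
      (1 + r ^ (2 - s)) ^ (-(2 * (((n:ℝ) - 2) / (2 - s)) + 1 + 1))) * h2pσ
  rw [div_eq_div_iff hDen (by nlinarith : (2 * (2 * (n:ℝ) - 2 - s)) ≠ 0)]
  linear_combination (-(2 * (n:ℝ) * V * (kappa n s) ^ 2 * ((n:ℝ) - 2) ^ 2)) * rel2' +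
    (-(((n:ℝ) - 2) * ((n:ℝ) + 4 - s) * (n:ℝ) * V * (kappa n s) ^ 2)) * rel1'
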